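/- Every indecomposable balanced complex orthogonal design (BCOD) with 2 columns has parameters [2, 2, 1] and is equivalent to the 2×2 matrix with rows (z_1, 0) and (0, z_1^*). -/

import Mathlib

open Matrix

/-- A formal entry of a complex orthogonal design: either `0`, or `± z_i`, or `± z_i^*`.
Here `sign = true` means sign `+1`, and `conj = true` means the conjugated symbol `z_i^*`. -/
inductive CODEntry (k : ℕ) : Type where
  | zero : CODEntry k
  | var (sign : Bool) (conj : Bool) (idx : Fin k) : CODEntry k
deriving DecidableEq

namespace CODEntry

variable {k k' : ℕ}

/-- Evaluate a formal entry at an assignment of complex values to the indeterminates. -/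
def eval (z : Fin k → ℂ) : CODEntry k → ℂ
  | zero => 0
  | var s c i => (if s then (1 : ℂ) else -1) * (if c then (starRingEnd ℂ) (z i) else z i)

/-- Formal negation of an entry. -/
def neg : CODEntry k → CODEntry k
  | zero => zero
  | var s c i => var (!s) c i

/-- Formal conjugation of an entry (with `0^* = 0`). -/
def conj : CODEntry k → CODEntry k
  | zero => zero
  | var s c i => var s (!c) i

/-- Optionally negate an entry. -/
def negIf (b : Bool) (e : CODEntry k) : CODEntry k := if b then e.neg else e

/-- Rename variables according to a permutation of the indices. -/
def rename (σ : Equiv.Perm (Fin k)) : CODEntry k → CODEntry k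
  | zero => zero
  | var s c i => var s c (σ i)

/-- Negate all instances of the variable `z_j`. -/
def negVar (j : Fin k) : CODEntry k → CODEntry k
  | zero => zero
  | var s c i => if i = j then var (!s) c i else var s c i

/-- Conjugate all instances of the variable `z_j` (swap `z_j ↔ z_j^*`). -/
def conjVar (j : Fin k) : CODEntry k → CODEntry k
  | zero => zero
  | var s c i => if i = j then var s (!c) i else var s c i

/-- Transport an entry along a map of variable index sets. -/
def mapIdx (f : Fin k → Fin k') : CODEntry k → CODEntry k'
  | zero => zero
  | var s c i => var s c (f i)

/-- Whether a (nonzero) entry is a conjugated symbol `± z_i^*`. -/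
def isConj : CODEntry k → Bool
  | zero => false
  | var _ c _ => c

/-- The index of the variable occurring in an entry, if any. -/
def index : CODEntry k → Option (Fin k)
  | zero => none
  | var _ _ i => some i

end CODEntry

/-- `G` is a `[p, n, k]` complex orthogonal design (COD): for every assignment of complex
values to the indeterminates, `Gᴴ * G = (|z_1|² + … + |z_k|²) • I_n`. -/
def IsCOD {p n k : ℕ} (G : Matrix (Fin p) (Fin n) (CODEntry k)) : Prop :=
  ∀ z : Fin k → ℂ,
    (G.map (CODEntry.eval z))ᴴ * (G.map (CODEntry.eval z)) =
      ((∑ i, Complex.normSq (z i) : ℝ) : ℂ) • (1 : Matrix (Fin n) (Fin n) ℂ)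

/-- The equivalence operations on `[p, n, k]` CODs. -/
inductive EquivOp (p n k : ℕ) : Type where
  | rowPerm (σ : Equiv.Perm (Fin p))
  | rowNeg (r : Fin p)
  | colPerm (σ : Equiv.Perm (Fin n))
  | colNeg (c : Fin n)
  | varRename (σ : Equiv.Perm (Fin k))
  | varNeg (i : Fin k)
  | varConj (i : Fin k)

namespace EquivOp

variable {p n k : ℕ}

/-- Apply an equivalence operation to a matrix of formal entries. -/
def apply (G : Matrix (Fin p) (Fin n) (CODEntry k)) :
    EquivOp p n k → Matrix (Fin p) (Fin n) (CODEntry k)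
  | rowPerm σ => fun r c => G (σ r) c
  | rowNeg r₀ => fun r c => if r = r₀ then (G r c).neg else G r c
  | colPerm σ => fun r c => G r (σ c)
  | colNeg c₀ => fun r c => if c = c₀ then (G r c).neg else G r c
  | varRename σ => fun r c => (G r c).rename σ
  | varNeg i => fun r c => (G r c).negVar i
  | varConj i => fun r c => (G r c).conjVar i

/-- The operation is a column permutation. -/
def IsColPerm : EquivOp p n k → Prop
  | colPerm _ => True
  | _ => False

/-- The operation is a column negation. -/
def IsColNeg : EquivOp p n k → Prop
  | colNeg _ => True
  | _ => False

/-- The operation is a variable renaming. -/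
def IsVarRename : EquivOp p n k → Prop
  | varRename _ => True
  | _ => False

/-- Where each row of the original matrix is sent by the operation. -/
def rowMap : EquivOp p n k → Equiv.Perm (Fin p)
  | rowPerm σ => σ⁻¹
  | _ => 1

end EquivOp

/-- Apply a finite sequence of equivalence operations, in order. -/
def applyOps {p n k : ℕ} (G : Matrix (Fin p) (Fin n) (CODEntry k))
    (ops : List (EquivOp p n k)) : Matrix (Fin p) (Fin n) (CODEntry k) :=
  ops.foldl EquivOp.apply G

/-- Where each row of the original matrix is sent by a sequence of operations. -/
def opsRowMap {p n k : ℕ} (ops : List (EquivOp p n k)) : Equiv.Perm (Fin p) :=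
  ops.foldl (fun τ op => op.rowMap * τ) 1

/-- An operation on a COD with `m + m` columns is column-restricted if, in case it is a
column permutation, it is the transposition of columns `i` and `m + i` for some `i`. -/
def EquivOp.ColumnRestricted {p m k : ℕ} : EquivOp p (m + m) k → Prop
  | .colPerm σ => ∃ i : Fin m, σ = Equiv.swap (Fin.castAdd m i) (Fin.natAdd m i)
  | _ => True

/-- `G` contains the `B_i` form submatrix on the `2m` rows selected by the embedding `f`:
the block matrix `((z_i I_m, M), (−Mᴴ, z_i^* I_m))` where `M` is the top-right block. -/
def ContainsBFormWith {p m k : ℕ} (G : Matrix (Fin p) (Fin (m + m)) (CODEntry k))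
    (i : Fin k) (f : Fin (m + m) ↪ Fin p) : Prop :=
  (∀ r s : Fin m, G (f (Fin.castAdd m r)) (Fin.castAdd m s) =
      if r = s then CODEntry.var true false i else CODEntry.zero) ∧
  (∀ r s : Fin m, G (f (Fin.natAdd m r)) (Fin.natAdd m s) =
      if r = s then CODEntry.var true true i else CODEntry.zero) ∧
  (∀ r s : Fin m, G (f (Fin.natAdd m r)) (Fin.castAdd m s) =
      ((G (f (Fin.castAdd m s)) (Fin.natAdd m r)).conj).neg)

/-- As `ContainsBFormWith`, and moreover the top-right block `M` is (formally)
skew-symmetric: `Mᵀ = −M`. -/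
def ContainsSkewBFormWith {p m k : ℕ} (G : Matrix (Fin p) (Fin (m + m)) (CODEntry k))
    (i : Fin k) (f : Fin (m + m) ↪ Fin p) : Prop :=
  ContainsBFormWith G i f ∧
  ∀ r s : Fin m, G (f (Fin.castAdd m s)) (Fin.natAdd m r) =
    (G (f (Fin.castAdd m r)) (Fin.natAdd m s)).neg

/-- `G` is in `B_i` form: after equivalence operations excluding column permutations
(and not renaming variables), it contains the `B_i` form submatrix. -/
def InBForm {p m k : ℕ} (G : Matrix (Fin p) (Fin (m + m)) (CODEntry k)) (i : Fin k) : Prop :=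
  ∃ ops : List (EquivOp p (m + m) k),
    (∀ op ∈ ops, ¬ op.IsColPerm ∧ ¬ op.IsVarRename) ∧
    ∃ f, ContainsBFormWith (applyOps G ops) i f

/-- `G` is in `B_i` form with skew-symmetric block `M_i`. -/
def InSkewBForm {p m k : ℕ} (G : Matrix (Fin p) (Fin (m + m)) (CODEntry k)) (i : Fin k) : Prop :=
  ∃ ops : List (EquivOp p (m + m) k),
    (∀ op ∈ ops, ¬ op.IsColPerm ∧ ¬ op.IsVarRename) ∧
    ∃ f, ContainsSkewBFormWith (applyOps G ops) i f

/-- `G` is a balanced complex orthogonal design (BCOD) with `2m` columns: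
a COD in which every row has exactly `m` zero entries (hence `m` nonzero ones),
every row is conjugation-separated, and for each variable `z_j` it is in `B_j` form
with skew-symmetric block `M_j`. -/
def IsBCOD {p m k : ℕ} (G : Matrix (Fin p) (Fin (m + m)) (CODEntry k)) : Prop :=
  IsCOD G ∧
  (∀ r : Fin p, (Finset.univ.filter fun c => G r c = CODEntry.zero).card = m) ∧
  (∀ r : Fin p,
      (∀ c, G r c ≠ CODEntry.zero → (G r c).isConj = true) ∨
      (∀ c, G r c ≠ CODEntry.zero → (G r c).isConj = false)) ∧
  (∀ j : Fin k, InSkewBForm G j)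

/-- `G` is the direct sum of `G₁` (on top) and `G₂` (below), where `G₁` and `G₂` use
disjoint sets of indeterminates, embedded into `Fin k` via `ι₁` and `ι₂`. -/
def IsDirectSumOf {p n k p₁ p₂ k₁ k₂ : ℕ} (hp : p = p₁ + p₂)
    (G : Matrix (Fin p) (Fin n) (CODEntry k))
    (G₁ : Matrix (Fin p₁) (Fin n) (CODEntry k₁))
    (G₂ : Matrix (Fin p₂) (Fin n) (CODEntry k₂))
    (ι₁ : Fin k₁ ↪ Fin k) (ι₂ : Fin k₂ ↪ Fin k) : Prop :=
  k = k₁ + k₂ ∧ (∀ a b, ι₁ a ≠ ι₂ b) ∧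
  ∀ (r : Fin p) (c : Fin n),
    if h : (r : ℕ) < p₁ then G r c = (G₁ ⟨(r : ℕ), h⟩ c).mapIdx (fun i => ι₁ i)
    else G r c = (G₂ ⟨(r : ℕ) - p₁, by have := r.isLt; omega⟩ c).mapIdx (fun i => ι₂ i)

/-- A COD is decomposable if, after a permutation of its rows, it can be expressed as
the direct sum of two (nonempty) CODs on disjoint sets of indeterminates. -/
def IsDecomposable {p n k : ℕ} (G : Matrix (Fin p) (Fin n) (CODEntry k)) : Prop :=
  ∃ (σ : Equiv.Perm (Fin p)) (p₁ p₂ k₁ k₂ : ℕ) (hp : p = p₁ + p₂)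
    (G₁ : Matrix (Fin p₁) (Fin n) (CODEntry k₁))
    (G₂ : Matrix (Fin p₂) (Fin n) (CODEntry k₂))
    (ι₁ : Fin k₁ ↪ Fin k) (ι₂ : Fin k₂ ↪ Fin k),
    0 < p₁ ∧ 0 < p₂ ∧ IsCOD G₁ ∧ IsCOD G₂ ∧
    IsDirectSumOf hp (fun r c => G (σ r) c) G₁ G₂ ι₁ ι₂

/-- Rows `r₁` and `r₂` of `G` form a pair: if `r₁` is `(α₁,…,α_m, β₁,…,β_m)` then `r₂`
is `(±β₁^*,…,±β_m^*, ±α₁^*,…,±α_m^*)` (the signs may differ from entry to entry). -/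
def IsPairRows {p m k : ℕ} (G : Matrix (Fin p) (Fin (m + m)) (CODEntry k))
    (r₁ r₂ : Fin p) : Prop :=
  ∀ s : Fin m,
    (∃ b : Bool, G r₂ (Fin.castAdd m s) = CODEntry.negIf b ((G r₁ (Fin.natAdd m s)).conj)) ∧
    (∃ b : Bool, G r₂ (Fin.natAdd m s) = CODEntry.negIf b ((G r₁ (Fin.castAdd m s)).conj))

/-- The canonical `[2, 2, 1]` BCOD with rows `(z₁, 0)` and `(0, z₁^*)`. -/
def canonicalBCOD2 : Matrix (Fin 2) (Fin (1 + 1)) (CODEntry 1) :=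
  fun r c =>
    if (r : ℕ) = 0 then
      (if (c : ℕ) = 0 then CODEntry.var true false 0 else CODEntry.zero)
    else
      (if (c : ℕ) = 0 then CODEntry.zero else CODEntry.var true true 0)


namespace BCODAux
open CODEntry Finset

lemma eval_normSq {k : ℕ} (z : Fin k → ℂ) (s c : Bool) (i : Fin k) :
    Complex.normSq (CODEntry.eval z (.var s c i)) = Complex.normSq (z i) := by
  cases s <;> cases c <;> simp [CODEntry.eval]

lemma star_eval_mul {k : ℕ} (z : Fin k → ℂ) (e : CODEntry k) :
    star (e.eval z) * e.eval z = (Complex.normSq (e.eval z) : ℂ) := by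
  rw [Complex.star_def, Complex.normSq_eq_conj_mul_self]

def auxDown {k : ℕ} : CODEntry (k+1) → CODEntry k
  | .zero => .zero
  | .var s c i => if h : (i : ℕ) = 0 then .zero else .var s c ⟨(i:ℕ) - 1, by omega⟩

lemma auxDown_mapIdx {k : ℕ} {e : CODEntry (k+1)} (he : e.index ≠ some 0) :
    (auxDown e).mapIdx Fin.succ = e := by
  cases e with
  | zero => rfl
  | var s c i =>
    have hi : (i : ℕ) ≠ 0 := by
      intro h; exact he (by simp [CODEntry.index]; exact Fin.ext h)
    simp only [auxDown, dif_neg hi, CODEntry.mapIdx]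
    congr 1
    exact Fin.ext (by simp [Fin.succ]; omega)

lemma eval_auxDown {k : ℕ} (z' : Fin k → ℂ) (e : CODEntry (k+1)) (he : e.index ≠ some 0) :
    (auxDown e).eval z' =
      e.eval (fun i => if h : (i:ℕ) = 0 then 0 else z' ⟨(i:ℕ)-1, by omega⟩) := by
  cases e with
  | zero => rfl
  | var s c i =>
    have hi : (i : ℕ) ≠ 0 := by
      intro h; exact he (by simp [CODEntry.index]; exact Fin.ext h)
    simp only [auxDown, dif_neg hi, CODEntry.eval]

lemma eval_eq_zero_of_index {k : ℕ} (z : Fin k → ℂ) (e : CODEntry k) (j : Fin k)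
    (hj : e.index = some j) (hz : z j = 0) : e.eval z = 0 := by
  cases e with
  | zero => rfl
  | var s c i =>
    simp only [CODEntry.index, Option.some_inj] at hj
    subst hj
    simp [CODEntry.eval, hz]

lemma exists_unique_row {p n k : ℕ} {G : Matrix (Fin p) (Fin n) (CODEntry k)}
    (hG : IsCOD G) (j : Fin k) (c : Fin n) :
    ∃! r : Fin p, (G r c).index = some j := by
  classical
  set z : Fin k → ℂ := fun i => if i = j then 1 else 0 with hz
  have h := congrFun (congrFun (hG z) c) c
  have hL : ((G.map (CODEntry.eval z))ᴴ * (G.map (CODEntry.eval z))) c c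
      = ∑ r, star ((G r c).eval z) * ((G r c).eval z) := by
    simp [Matrix.mul_apply, Matrix.conjTranspose_apply, Matrix.map_apply]
  have hR : (((∑ i, Complex.normSq (z i) : ℝ) : ℂ) • (1 : Matrix (Fin n) (Fin n) ℂ)) c c
      = ((1 : ℝ) : ℂ) := by
    have : (∑ i, Complex.normSq (z i) : ℝ) = 1 := by
      simp [hz, apply_ite Complex.normSq, Finset.sum_ite_eq']
    simp [this, Matrix.one_apply]
  rw [hL, hR] at h
  have key : ∀ e : CODEntry k,
      Complex.normSq (e.eval z) = if e.index = some j then (1:ℝ) else 0 := by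
    intro e
    cases e with
    | zero => simp [CODEntry.eval, CODEntry.index]
    | var s cc i =>
      rw [eval_normSq]
      by_cases hij : i = j <;> simp [hz, hij, CODEntry.index]
  have h2 : ∑ r, (if (G r c).index = some j then (1:ℝ) else 0) = 1 := by
    have := h
    simp only [star_eval_mul, key] at this
    exact_mod_cast (by push_cast at this ⊢; exact_mod_cast this : _)
  rw [Finset.sum_boole] at h2
  have hcard : (Finset.univ.filter fun r => (G r c).index = some j).card = 1 := by
    exact_mod_cast h2
  obtain ⟨a, ha⟩ := Finset.card_eq_one.mp hcard
  refine ⟨a, ?_, ?_⟩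
  · have : a ∈ Finset.univ.filter fun r => (G r c).index = some j := by
      rw [ha]; exact Finset.mem_singleton_self a
    exact (Finset.mem_filter.mp this).2
  · intro y hy
    have : y ∈ Finset.univ.filter fun r => (G r c).index = some j :=
      Finset.mem_filter.mpr ⟨Finset.mem_univ _, hy⟩
    rw [ha] at this
    exact Finset.mem_singleton.mp this

def auxG1 (s₀ c₀ s₁ c₁ : Bool) : Matrix (Fin 2) (Fin (1 + 1)) (CODEntry 1) :=
  fun r c =>
    if (r : ℕ) = 0 then
      (if (c : ℕ) = 0 then .var s₀ c₀ 0 else .zero)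
    else
      (if (c : ℕ) = 0 then .zero else .var s₁ c₁ 0)

lemma isCOD_auxG1 (s₀ c₀ s₁ c₁ : Bool) : IsCOD (auxG1 s₀ c₀ s₁ c₁) := by
  intro z
  ext c d
  fin_cases c <;> fin_cases d <;>
    cases s₀ <;> cases c₀ <;> cases s₁ <;> cases c₁ <;>
      simp [auxG1, Matrix.mul_apply, Matrix.conjTranspose_apply, Fin.sum_univ_two,
        Fin.sum_univ_one, CODEntry.eval, Matrix.one_apply, Complex.star_def,
        ← Complex.normSq_eq_conj_mul_self, Complex.mul_conj]

lemma row_struct {p k : ℕ} {G : Matrix (Fin p) (Fin (1+1)) (CODEntry k)}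
    (hbal : ∀ r : Fin p, (Finset.univ.filter fun c => G r c = CODEntry.zero).card = 1)
    (r : Fin p) :
    ∃ c₀ : Fin (1+1), G r c₀ = .zero ∧ ∀ c, c ≠ c₀ → G r c ≠ .zero := by
  obtain ⟨a, ha⟩ := Finset.card_eq_one.mp (hbal r)
  refine ⟨a, ?_, ?_⟩
  · have : a ∈ Finset.univ.filter fun c => G r c = CODEntry.zero := by
      rw [ha]; exact Finset.mem_singleton_self a
    exact (Finset.mem_filter.mp this).2
  · intro c hc hzero
    have : c ∈ Finset.univ.filter fun c => G r c = CODEntry.zero :=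
      Finset.mem_filter.mpr ⟨Finset.mem_univ _, hzero⟩
    rw [ha] at this
    exact hc (Finset.mem_singleton.mp this)

end BCODAux

/-- every indecomposable BCOD with `2` columns has parameters `[2, 2, 1]`
and is equivalent to the matrix with rows `(z₁, 0)` and `(0, z₁^*)`. -/
theorem bcod_two_columns_canonical {p k : ℕ} (hk : 1 ≤ k)
    (G : Matrix (Fin p) (Fin (1 + 1)) (CODEntry k))
    (hG : IsBCOD G) (hind : ¬ IsDecomposable G) :
    ∃ (hp : p = 2) (hkk : k = 1),
      ∃ ops : List (EquivOp 2 (1 + 1) 1),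
        applyOps (fun r c => (G (Fin.cast hp.symm r) c).mapIdx (Fin.cast hkk)) ops =
          canonicalBCOD2 := by
  classical
  obtain ⟨hcod, hbal, -, hB⟩ := hG
  obtain ⟨k', rfl⟩ : ∃ k', k = k' + 1 := ⟨k - 1, by omega⟩
  have hrow := BCODAux.row_struct hbal
  have hcol : ∀ c : Fin (1+1), c = (⟨0, by omega⟩ : Fin (1+1)) ∨ c = ⟨1, by omega⟩ := by
    intro c
    rcases c with ⟨cv, hcv⟩
    interval_cases cv
    · exact Or.inl rfl
    · exact Or.inr rfl
  have entry_of : ∀ (r : Fin p) (c : Fin (1+1)) (j : Fin (k'+1)),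
      (G r c).index = some j → ∃ s cc, G r c = .var s cc j := by
    intro r c j h
    rcases hE : G r c with _ | ⟨s, cc, i⟩ <;> rw [hE] at h
    · simp [CODEntry.index] at h
    · simp only [CODEntry.index, Option.some_inj] at h
      exact ⟨s, cc, by rw [h]⟩
  obtain ⟨r₀, h₀, hu₀⟩ := BCODAux.exists_unique_row hcod (0 : Fin (k'+1)) ⟨0, by omega⟩
  obtain ⟨r₁, h₁, hu₁⟩ := BCODAux.exists_unique_row hcod (0 : Fin (k'+1)) ⟨1, by omega⟩
  obtain ⟨s₀, c₀, hGr₀⟩ := entry_of _ _ _ h₀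
  obtain ⟨s₁, c₁, hGr₁⟩ := entry_of _ _ _ h₁
  have hz₀ : G r₀ ⟨1, by omega⟩ = .zero := by
    obtain ⟨cz, hcz, hnz⟩ := hrow r₀
    rcases hcol cz with rfl | rfl
    · rw [hGr₀] at hcz; exact absurd hcz (by simp)
    · exact hcz
  have hz₁ : G r₁ ⟨0, by omega⟩ = .zero := by
    obtain ⟨cz, hcz, hnz⟩ := hrow r₁
    rcases hcol cz with rfl | rfl
    · exact hcz
    · rw [hGr₁] at hcz; exact absurd hcz (by simp)
  have hne : r₀ ≠ r₁ := by
    intro h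
    rw [h, hz₁] at hGr₀
    cases hGr₀
  rcases Nat.eq_zero_or_pos k' with hk0 | hk1
  · -- k = 1 : conclude p = 2 and exhibit the canonical form
    subst hk0
    have hmem : ∀ r : Fin p, r = r₀ ∨ r = r₁ := by
      intro r
      obtain ⟨cz, hcz, hnz⟩ := hrow r
      rcases hcol cz with rfl | rfl
      · -- zero at col 0, nonzero at col 1
        have hne1 : G r ⟨1, by omega⟩ ≠ .zero := hnz _ (by simp [Fin.ext_iff])
        rcases hE : G r ⟨1, by omega⟩ with _ | ⟨s, cc, i⟩
        · exact absurd hE hne1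
        · have hi : i = 0 := Fin.ext (by omega)
          exact Or.inr (hu₁ r (by show (G r ⟨1, by omega⟩).index = some 0; rw [hE, hi]; rfl))
      · have hne1 : G r ⟨0, by omega⟩ ≠ .zero := hnz _ (by simp [Fin.ext_iff])
        rcases hE : G r ⟨0, by omega⟩ with _ | ⟨s, cc, i⟩
        · exact absurd hE hne1
        · have hi : i = 0 := Fin.ext (by omega)
          exact Or.inl (hu₀ r (by show (G r ⟨0, by omega⟩).index = some 0; rw [hE, hi]; rfl))
    have hp2 : p = 2 := by
      have h1 : p ≤ 2 := by
        have hle : (Finset.univ : Finset (Fin p)) ⊆ {r₀, r₁} := by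
          intro r _
          rcases hmem r with rfl | rfl <;> simp
        calc p = (Finset.univ : Finset (Fin p)).card := by simp
          _ ≤ ({r₀, r₁} : Finset (Fin p)).card := Finset.card_le_card hle
          _ ≤ ({r₁} : Finset (Fin p)).card + 1 := Finset.card_insert_le _ _
          _ ≤ 2 := by simp
      have h2 : 2 ≤ p := by
        have hlt0 := r₀.isLt
        have hlt1 := r₁.isLt
        have hne' : r₀.val ≠ r₁.val := fun h => hne (Fin.ext h)
        omega
      omega
    subst hp2
    refine ⟨rfl, rfl, ?_⟩
    have hfix : (fun (r : Fin 2) (c : Fin (1+1)) =>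
        (G (Fin.cast (Eq.symm (rfl : (2:ℕ) = 2)) r) c).mapIdx (Fin.cast (rfl : 0+1 = 1))) = G := by
      funext r c
      show (G r c).mapIdx (Fin.cast (rfl : 0+1 = 1)) = G r c
      rcases G r c with _ | ⟨s, cc, i⟩
      · rfl
      · exact congrArg (CODEntry.var s cc) (Fin.ext rfl)
    rw [hfix]
    obtain ⟨ops, -, f, ⟨⟨e00, e11, elow⟩, eskew⟩⟩ := hB 0
    set H := applyOps G ops with hH
    have h00 : H (f (Fin.castAdd 1 0)) (Fin.castAdd 1 0) = .var true false 0 := by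
      simpa using e00 0 0
    have h11 : H (f (Fin.natAdd 1 0)) (Fin.natAdd 1 0) = .var true true 0 := by
      simpa using e11 0 0
    have h01 : H (f (Fin.castAdd 1 0)) (Fin.natAdd 1 0) = .zero := by
      have h := eskew 0 0
      rcases hE : H (f (Fin.castAdd 1 0)) (Fin.natAdd 1 0) with _ | ⟨s, cc, i⟩
      · rfl
      · rw [hE] at h
        simp [CODEntry.neg] at h
    have h10 : H (f (Fin.natAdd 1 0)) (Fin.castAdd 1 0) = .zero := by
      have h := elow 0 0
      rw [h01] at h
      simpa [CODEntry.conj, CODEntry.neg] using h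
    have hfin2 : ∀ x : Fin 2, x = 0 ∨ x = 1 := by decide
    have hfne : f (Fin.castAdd 1 0) ≠ f (Fin.natAdd 1 0) := by
      intro h
      have h2 := congrArg Fin.val (f.injective h)
      simp at h2
    rcases hfin2 (f (Fin.castAdd 1 0)) with hf0 | hf0
    · have hf1 : f (Fin.natAdd 1 0) = 1 := by
        rcases hfin2 (f (Fin.natAdd 1 0)) with h | h
        · exact absurd (hf0.trans h.symm) hfne
        · exact h
      have H00 : H (0 : Fin 2) ⟨0, by omega⟩ = CODEntry.var true false 0 := by
        rw [hf0] at h00; exact h00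
      have H01 : H (0 : Fin 2) ⟨1, by omega⟩ = CODEntry.zero := by
        rw [hf0] at h01; exact h01
      have H10 : H (1 : Fin 2) ⟨0, by omega⟩ = CODEntry.zero := by
        rw [hf1] at h10; exact h10
      have H11 : H (1 : Fin 2) ⟨1, by omega⟩ = CODEntry.var true true 0 := by
        rw [hf1] at h11; exact h11
      refine ⟨ops, ?_⟩
      funext r c
      rcases hfin2 r with rfl | rfl <;> rcases hcol c with rfl | rfl
      · rw [show applyOps G ops = H from rfl, H00]; rfl
      · rw [show applyOps G ops = H from rfl, H01]; rfl
      · rw [show applyOps G ops = H from rfl, H10]; rfl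
      · rw [show applyOps G ops = H from rfl, H11]; rfl
    · have hf1 : f (Fin.natAdd 1 0) = 0 := by
        rcases hfin2 (f (Fin.natAdd 1 0)) with h | h
        · exact h
        · exact absurd (hf0.trans h.symm) hfne
      have H00 : H (1 : Fin 2) ⟨0, by omega⟩ = CODEntry.var true false 0 := by
        rw [hf0] at h00; exact h00
      have H01 : H (1 : Fin 2) ⟨1, by omega⟩ = CODEntry.zero := by
        rw [hf0] at h01; exact h01
      have H10 : H (0 : Fin 2) ⟨0, by omega⟩ = CODEntry.zero := by
        rw [hf1] at h10; exact h10
      have H11 : H (0 : Fin 2) ⟨1, by omega⟩ = CODEntry.var true true 0 := by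
        rw [hf1] at h11; exact h11
      refine ⟨ops ++ [EquivOp.rowPerm (Equiv.swap (0 : Fin 2) 1)], ?_⟩
      have happ : applyOps G (ops ++ [EquivOp.rowPerm (Equiv.swap (0 : Fin 2) 1)])
          = fun r c => H (Equiv.swap (0 : Fin 2) 1 r) c := by
        rw [applyOps, List.foldl_append]; rfl
      rw [happ]
      funext r c
      rcases hfin2 r with rfl | rfl <;> rcases hcol c with rfl | rfl
      · rw [Equiv.swap_apply_left, H00]; rfl
      · rw [Equiv.swap_apply_left, H01]; rfl
      · rw [Equiv.swap_apply_right, H10]; rfl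
      · rw [Equiv.swap_apply_right, H11]; rfl
  · -- k ≥ 2 : contradiction with indecomposability
    exfalso
    apply hind
    obtain ⟨r₂, h₂, -⟩ := BCODAux.exists_unique_row hcod (⟨1, by omega⟩ : Fin (k'+1)) ⟨0, by omega⟩
    have hr₂0 : r₂ ≠ r₀ := by
      intro h
      rw [h, hGr₀] at h₂
      simp only [CODEntry.index, Option.some_inj] at h₂
      exact absurd (congrArg Fin.val h₂) (by simp)
    have hr₂1 : r₂ ≠ r₁ := by
      intro h
      rw [h, hz₁] at h₂
      simp [CODEntry.index] at h₂
    have hp3 : 3 ≤ p := by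
      have hlt0 := r₀.isLt; have hlt1 := r₁.isLt; have hlt2 := r₂.isLt
      have e1 : r₀.val ≠ r₁.val := fun h => hne (Fin.ext h)
      have e2 : r₂.val ≠ r₀.val := fun h => hr₂0 (Fin.ext h)
      have e3 : r₂.val ≠ r₁.val := fun h => hr₂1 (Fin.ext h)
      omega
    obtain ⟨p₂, rfl⟩ : ∃ q, p = 2 + q := ⟨p - 2, by omega⟩
    have hp₂ : 0 < p₂ := by omega
    set a0 : Fin (2+p₂) := ⟨0, by omega⟩ with ha0
    set a1 : Fin (2+p₂) := ⟨1, by omega⟩ with ha1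
    set τ : Equiv.Perm (Fin (2+p₂)) := Equiv.swap a0 r₀ with hτ
    have hu : τ r₁ ≠ a0 := by
      intro h
      apply hne
      have h2 := congrArg τ h
      rw [Equiv.swap_apply_self] at h2
      rw [h2, hτ, Equiv.swap_apply_left]
    have ha01 : a0 ≠ a1 := by
      intro h; exact absurd (congrArg Fin.val h) (by simp [ha0, ha1])
    set σ : Equiv.Perm (Fin (2+p₂)) := (Equiv.swap a1 (τ r₁)).trans τ with hσ
    have hσ0 : σ a0 = r₀ := by
      rw [hσ, Equiv.trans_apply, Equiv.swap_apply_of_ne_of_ne ha01 hu.symm, hτ,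
        Equiv.swap_apply_left]
    have hσ1 : σ a1 = r₁ := by
      rw [hσ, Equiv.trans_apply, Equiv.swap_apply_left, hτ, Equiv.swap_apply_self]
    -- rows other than a0, a1 contain no occurrence of variable 0
    have hfree : ∀ r : Fin (2+p₂), 2 ≤ (r : ℕ) → ∀ c : Fin (1+1),
        (G (σ r) c).index ≠ some 0 := by
      intro r hr c hidx
      have hne0 : σ r ≠ r₀ := by
        intro h; rw [← hσ0] at h
        have := σ.injective h
        rw [this] at hr
        simp [ha0] at hr
      have hne1 : σ r ≠ r₁ := by
        intro h; rw [← hσ1] at h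
        have := σ.injective h
        rw [this] at hr
        simp [ha1] at hr
      rcases hcol c with rfl | rfl
      · exact hne0 (hu₀ _ hidx)
      · exact hne1 (hu₁ _ hidx)
    set G₂ : Matrix (Fin p₂) (Fin (1+1)) (CODEntry k') :=
      fun r c => BCODAux.auxDown (G (σ ⟨2 + (r : ℕ), by omega⟩) c) with hG₂
    have hcodG₂ : IsCOD G₂ := by
      intro z'
      obtain ⟨z, hz0, hzsum, hzdown⟩ :
          ∃ z : Fin (k'+1) → ℂ, z 0 = 0 ∧
            ((∑ i, Complex.normSq (z i) : ℝ) = ∑ i, Complex.normSq (z' i)) ∧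
            ∀ e : CODEntry (k'+1), e.index ≠ some 0 →
              (BCODAux.auxDown e).eval z' = e.eval z := by
        refine ⟨fun i => if h : (i:ℕ) = 0 then 0 else z' ⟨(i:ℕ)-1, by omega⟩,
          by simp, ?_, fun e he => BCODAux.eval_auxDown z' e he⟩
        rw [Fin.sum_univ_succ]
        have hsucc : ∀ i : Fin k',
            (if h : ((i.succ : Fin (k'+1)) : ℕ) = 0 then 0
              else z' ⟨((i.succ : Fin (k'+1)) : ℕ)-1, by omega⟩) = z' i := by
          intro i
          have h1 : ((i.succ : Fin (k'+1)) : ℕ) ≠ 0 := by simp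
          rw [dif_neg h1]
          exact congrArg z' (Fin.ext (by simp))
        simp [hsucc]
      have hent : ∀ (r' : Fin p₂) (cc : Fin (1+1)),
          (G₂ r' cc).eval z' = (G (σ ⟨2 + (r' : ℕ), by omega⟩) cc).eval z := by
        intro r' cc
        rw [hG₂]
        exact hzdown _ (hfree _ (by simp) _)
      have hr0 : ∀ c, (G r₀ c).eval z = 0 := by
        intro c
        rcases hcol c with rfl | rfl
        · exact BCODAux.eval_eq_zero_of_index z _ 0 (by rw [hGr₀]; rfl) hz0
        · rw [hz₀]; rfl
      have hr1 : ∀ c, (G r₁ c).eval z = 0 := by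
        intro c
        rcases hcol c with rfl | rfl
        · rw [hz₁]; rfl
        · exact BCODAux.eval_eq_zero_of_index z _ 0 (by rw [hGr₁]; rfl) hz0
      ext c d
      have hmain := congrFun (congrFun (hcod z) c) d
      have hL : ((G.map (CODEntry.eval z))ᴴ * (G.map (CODEntry.eval z))) c d
          = ∑ r, star ((G r c).eval z) * ((G r d).eval z) := by
        simp [Matrix.mul_apply, Matrix.conjTranspose_apply, Matrix.map_apply]
      rw [hL] at hmain
      have hperm : ∑ r, star ((G r c).eval z) * ((G r d).eval z)
          = ∑ r, star ((G (σ r) c).eval z) * ((G (σ r) d).eval z) :=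
        (Equiv.sum_comp σ (fun r => star ((G r c).eval z) * ((G r d).eval z))).symm
      rw [hperm] at hmain
      have hsplit : ∑ r, star ((G (σ r) c).eval z) * ((G (σ r) d).eval z)
          = ∑ r' : Fin p₂, star ((G₂ r' c).eval z') * ((G₂ r' d).eval z') := by
        rw [Fin.sum_univ_add (fun r : Fin (2+p₂) =>
          star ((G (σ r) c).eval z) * ((G (σ r) d).eval z)), Fin.sum_univ_two]
        have hc0 : Fin.castAdd p₂ (0 : Fin 2) = a0 := Fin.ext (by simp [ha0])
        have hc1 : Fin.castAdd p₂ (1 : Fin 2) = a1 := Fin.ext (by simp [ha1])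
        rw [hc0, hc1, hσ0, hσ1]
        rw [hr0 c, hr1 c]
        simp only [star_zero, zero_mul, add_zero, zero_add]
        refine Finset.sum_congr rfl fun i _ => ?_
        have hnat : Fin.natAdd 2 i = (⟨2 + (i : ℕ), by omega⟩ : Fin (2+p₂)) :=
          Fin.ext rfl
        rw [hnat]
        exact (congrArg₂ (fun x y => star x * y) (hent i c) (hent i d)).symm
      rw [hsplit] at hmain
      have hL2 : ((G₂.map (CODEntry.eval z'))ᴴ * (G₂.map (CODEntry.eval z'))) c d
          = ∑ r', star ((G₂ r' c).eval z') * ((G₂ r' d).eval z') := by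
        simp [Matrix.mul_apply, Matrix.conjTranspose_apply, Matrix.map_apply]
      rw [hL2, hmain, hzsum]
    refine ⟨σ, 2, p₂, 1, k', rfl, BCODAux.auxG1 s₀ c₀ s₁ c₁, G₂,
      ⟨fun _ => 0, fun a b _ => Subsingleton.elim a b⟩,
      ⟨Fin.succ, Fin.succ_injective _⟩,
      by omega, hp₂, BCODAux.isCOD_auxG1 _ _ _ _, hcodG₂, by omega, ?_, ?_⟩
    · intro a b h
      exact (Fin.succ_ne_zero b) h.symm
    · intro r c
      by_cases h : (r : ℕ) < 2
      · rw [dif_pos h]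
        have : r = a0 ∨ r = a1 := by
          rcases r with ⟨rv, hrv⟩
          interval_cases rv
          · exact Or.inl rfl
          · exact Or.inr rfl
        rcases this with rfl | rfl
        · show G (σ a0) c = _
          rw [hσ0]
          rcases hcol c with rfl | rfl
          · rw [hGr₀]; rfl
          · rw [hz₀]; rfl
        · show G (σ a1) c = _
          rw [hσ1]
          rcases hcol c with rfl | rfl
          · rw [hz₁]; rfl
          · rw [hGr₁]; rfl
      · rw [dif_neg h]
        show G (σ r) c = _
        have hrge : 2 ≤ (r : ℕ) := by omega
        have hre : (⟨2 + ((⟨(r : ℕ) - 2, by omega⟩ : Fin p₂) : ℕ), by omega⟩ : Fin (2+p₂)) = r :=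
          Fin.ext (by simp; omega)
        rw [hG₂]
        simp only
        rw [hre]
        exact (BCODAux.auxDown_mapIdx (hfree r hrge c)).symm
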